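/- Let α ≥ 1 and suppose λ ≠ 0 and f : [0,1] → ℝ is continuous, not identically zero, and satisfies λ f(x) = ∫₀¹ G_α(x,x') f(x') dx' for all x ∈ [0,1]. Then λ > 0, f is twice differentiable on (0,1) with λ f''(x) = −(2/π) f(x) for all x ∈ (0,1), and the number ω := √(2/(πλ)) satisfies 2 + 2cos(ω) + ω·sin(ω)·(1 − 2απ) = 0. -/

import Mathlib

open Real MeasureTheory

/-- The kernel `G_α(x,x') = α − |x − x'|/π`. -/
noncomputable def kernelG (α x x' : ℝ) : ℝ := α - |x - x'| / π

set_option maxHeartbeats 4000000 in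
/-- **Eigenfunctions of the `G_α` integral operator.**  If `λ ≠ 0` and a continuous,
not-identically-zero `f` satisfies `λ f(x) = ∫₀¹ G_α(x,y) f(y) dy` on `[0,1]`, then
`λ > 0`, `f` is twice differentiable on `(0,1)` with `λ f'' = −(2/π) f` there, and
`ω := √(2/(πλ))` satisfies `2 + 2cos(ω) + ω sin(ω)(1 − 2απ) = 0`. -/
theorem kernelG_eigenfunction_ode (α : ℝ) (hα : 1 ≤ α) (lam : ℝ) (f : ℝ → ℝ)
    (hlam : lam ≠ 0) (hf : ContinuousOn f (Set.Icc (0 : ℝ) 1))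
    (hne : ∃ x ∈ Set.Icc (0 : ℝ) 1, f x ≠ 0)
    (heig : ∀ x ∈ Set.Icc (0 : ℝ) 1,
      lam * f x = ∫ y in Set.Icc (0 : ℝ) 1, kernelG α x y * f y) :
    0 < lam ∧
    (∃ f' f'' : ℝ → ℝ, ∀ x ∈ Set.Ioo (0 : ℝ) 1,
      HasDerivWithinAt f (f' x) (Set.Ioo (0 : ℝ) 1) x ∧
      HasDerivWithinAt f' (f'' x) (Set.Ioo (0 : ℝ) 1) x ∧
      lam * f'' x = -(2 / π) * f x) ∧
    (2 + 2 * Real.cos (Real.sqrt (2 / (π * lam))) +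
      Real.sqrt (2 / (π * lam)) * Real.sin (Real.sqrt (2 / (π * lam))) * (1 - 2 * α * π)
      = 0) := by
  have hπ : (0:ℝ) < π := Real.pi_pos
  have h0 : (0:ℝ) ∈ Set.Icc (0:ℝ) 1 := by norm_num
  have h1 : (1:ℝ) ∈ Set.Icc (0:ℝ) 1 := by norm_num
  set u : ℝ → ℝ := fun x => ∫ t in (0:ℝ)..x, f t with hu_def
  set v : ℝ → ℝ := fun x => ∫ t in (0:ℝ)..x, t * f t with hv_def
  have hsub : ∀ {c d : ℝ}, c ∈ Set.Icc (0:ℝ) 1 → d ∈ Set.Icc (0:ℝ) 1 →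
      Set.uIcc c d ⊆ Set.Icc (0:ℝ) 1 := by
    intro c d hc hd
    exact Set.uIcc_subset_Icc hc hd
  have hfc : ∀ {g : ℝ → ℝ}, ContinuousOn g (Set.Icc (0:ℝ) 1) → ∀ {c d : ℝ},
      c ∈ Set.Icc (0:ℝ) 1 → d ∈ Set.Icc (0:ℝ) 1 → IntervalIntegrable g volume c d := by
    intro g hg c d hc hd
    exact (hg.mono (hsub hc hd)).intervalIntegrable
  have hu0 : u 0 = 0 := intervalIntegral.integral_same
  have hv0 : v 0 = 0 := intervalIntegral.integral_same
  -- continuity of auxiliary integrands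
  have hcid : ContinuousOn (fun t : ℝ => t * f t) (Set.Icc (0:ℝ) 1) :=
    continuousOn_id.mul hf
  -- splitting of the absolute-value integral
  have hsplit : ∀ x ∈ Set.Icc (0:ℝ) 1,
      (∫ y in Set.Icc (0:ℝ) 1, |x - y| * f y) = 2*x*(u x) - 2*(v x) + v 1 - x * u 1 := by
    intro x hx
    obtain ⟨hx0, hx1⟩ := hx
    have habs : ContinuousOn (fun y => |x - y| * f y) (Set.Icc (0:ℝ) 1) :=
      (((continuous_const.sub continuous_id).abs).continuousOn).mul hf
    have h1' : (∫ y in Set.Icc (0:ℝ) 1, |x - y| * f y)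
        = ∫ y in (0:ℝ)..1, |x - y| * f y := by
      rw [intervalIntegral.integral_of_le (by norm_num : (0:ℝ) ≤ 1),
        MeasureTheory.integral_Icc_eq_integral_Ioc]
    have ha : IntervalIntegrable (fun y => |x - y| * f y) volume 0 x :=
      hfc habs h0 ⟨hx0, hx1⟩
    have hb : IntervalIntegrable (fun y => |x - y| * f y) volume x 1 :=
      hfc habs ⟨hx0, hx1⟩ h1
    have h2 : (∫ y in (0:ℝ)..1, |x - y| * f y)
        = (∫ y in (0:ℝ)..x, |x - y| * f y) + ∫ y in x..1, |x - y| * f y :=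
      (intervalIntegral.integral_add_adjacent_intervals ha hb).symm
    have h3 : (∫ y in (0:ℝ)..x, |x - y| * f y)
        = ∫ y in (0:ℝ)..x, (x * f y - y * f y) := by
      apply intervalIntegral.integral_congr
      intro y hy
      rw [Set.uIcc_of_le hx0] at hy
      have hxy : |x - y| = x - y := abs_of_nonneg (by linarith [hy.2])
      show |x - y| * f y = x * f y - y * f y
      rw [hxy]; ring
    have h4 : (∫ y in x..1, |x - y| * f y)
        = ∫ y in x..1, (y * f y - x * f y) := by
      apply intervalIntegral.integral_congr
      intro y hy
      rw [Set.uIcc_of_le hx1] at hy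
      have hxy : |x - y| = y - x := by
        rw [abs_of_nonpos (by linarith [hy.1])]; ring
      show |x - y| * f y = y * f y - x * f y
      rw [hxy]; ring
    have hfa : IntervalIntegrable f volume 0 x := hfc hf h0 ⟨hx0, hx1⟩
    have hfb : IntervalIntegrable f volume x 1 := hfc hf ⟨hx0, hx1⟩ h1
    have hga : IntervalIntegrable (fun t : ℝ => t * f t) volume 0 x := hfc hcid h0 ⟨hx0, hx1⟩
    have hgb : IntervalIntegrable (fun t : ℝ => t * f t) volume x 1 := hfc hcid ⟨hx0, hx1⟩ h1
    have h5 : (∫ y in (0:ℝ)..x, (x * f y - y * f y)) = x * u x - v x := by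
      rw [intervalIntegral.integral_sub (hfa.const_mul x) hga,
        intervalIntegral.integral_const_mul]
    have h6 : (∫ y in x..1, (y * f y - x * f y)) = (v 1 - v x) - x * (u 1 - u x) := by
      rw [intervalIntegral.integral_sub hgb (hfb.const_mul x),
        intervalIntegral.integral_const_mul]
      have e1 : v x + (∫ y in x..1, y * f y) = v 1 :=
        intervalIntegral.integral_add_adjacent_intervals (hfc hcid h0 ⟨hx0, hx1⟩) hgb
      have e2 : u x + (∫ y in x..1, f y) = u 1 :=
        intervalIntegral.integral_add_adjacent_intervals (hfc hf h0 ⟨hx0, hx1⟩) hfb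
      have e1' : (∫ y in x..1, y * f y) = v 1 - v x := by linarith
      have e2' : (∫ y in x..1, f y) = u 1 - u x := by linarith
      rw [e1', e2']
    rw [h1', h2, h3, h4, h5, h6]; ring
  -- the eigenvalue equation in terms of u, v
  have hfφ : ∀ x ∈ Set.Icc (0:ℝ) 1,
      f x = (α * u 1 - (2*x*(u x) - 2*(v x) + v 1 - x * u 1)/π)/lam := by
    intro x hx
    have h := heig x hx
    have hIf : (∫ y in Set.Icc (0:ℝ) 1, f y) = u 1 := by
      rw [MeasureTheory.integral_Icc_eq_integral_Ioc,
        ← intervalIntegral.integral_of_le (by norm_num : (0:ℝ) ≤ 1)]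
    have habs : ContinuousOn (fun y => |x - y| * f y) (Set.Icc (0:ℝ) 1) :=
      (((continuous_const.sub continuous_id).abs).continuousOn).mul hf
    have hint1 : IntegrableOn (fun y => α * f y) (Set.Icc (0:ℝ) 1) volume :=
      (continuousOn_const.mul hf).integrableOn_compact isCompact_Icc
    have hint2 : IntegrableOn (fun y => (|x - y| * f y)/π) (Set.Icc (0:ℝ) 1) volume :=
      (habs.div_const π).integrableOn_compact isCompact_Icc
    have hker : (∫ y in Set.Icc (0:ℝ) 1, kernelG α x y * f y)
        = (∫ y in Set.Icc (0:ℝ) 1, α * f y) - ∫ y in Set.Icc (0:ℝ) 1, (|x - y| * f y)/π := by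
      rw [← MeasureTheory.integral_sub hint1 hint2]
      apply MeasureTheory.integral_congr_ae
      filter_upwards with y
      simp only [kernelG]
      ring
    rw [hker, MeasureTheory.integral_const_mul, hIf, MeasureTheory.integral_div,
      hsplit x hx] at h
    field_simp at h ⊢
    linarith
  -- derivatives of u and v within [0,1]
  have hu' : ∀ x ∈ Set.Icc (0:ℝ) 1, HasDerivWithinAt u (f x) (Set.Icc (0:ℝ) 1) x := by
    intro x hx
    haveI : Fact (x ∈ Set.Icc (0:ℝ) 1) := ⟨hx⟩
    exact intervalIntegral.integral_hasDerivWithinAt_right (hfc hf h0 hx)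
      (hf.stronglyMeasurableAtFilter_nhdsWithin measurableSet_Icc x) (hf x hx)
  have hv' : ∀ x ∈ Set.Icc (0:ℝ) 1, HasDerivWithinAt v (x * f x) (Set.Icc (0:ℝ) 1) x := by
    intro x hx
    haveI : Fact (x ∈ Set.Icc (0:ℝ) 1) := ⟨hx⟩
    exact intervalIntegral.integral_hasDerivWithinAt_right (hfc hcid h0 hx)
      (hcid.stronglyMeasurableAtFilter_nhdsWithin measurableSet_Icc x) (hcid x hx)
  -- first derivative of f
  set D : ℝ → ℝ := fun x => (u 1 - 2 * u x)/(π*lam) with hD_def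
  set D' : ℝ → ℝ := fun x => (-2 * f x)/(π*lam) with hD'_def
  have hφ' : ∀ x ∈ Set.Icc (0:ℝ) 1,
      HasDerivWithinAt (fun y => (α * u 1 - (2*y*(u y) - 2*(v y) + v 1 - y * u 1)/π)/lam)
        (D x) (Set.Icc (0:ℝ) 1) x := by
    intro x hx
    have ha : HasDerivWithinAt (fun y : ℝ => 2*y) 2 (Set.Icc (0:ℝ) 1) x := by
      simpa using ((hasDerivWithinAt_id x (Set.Icc (0:ℝ) 1)).const_mul (2:ℝ))
    have hmul : HasDerivWithinAt (fun y => 2*y*(u y)) (2 * u x + 2*x*f x) (Set.Icc (0:ℝ) 1) x :=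
      ha.mul (hu' x hx)
    have hb : HasDerivWithinAt (fun y => 2*(v y)) (2*(x * f x)) (Set.Icc (0:ℝ) 1) x :=
      (hv' x hx).const_mul 2
    have hc : HasDerivWithinAt (fun y : ℝ => y * u 1) (u 1) (Set.Icc (0:ℝ) 1) x := by
      simpa using (hasDerivWithinAt_id x (Set.Icc (0:ℝ) 1)).mul_const (u 1)
    have hinner : HasDerivWithinAt (fun y => 2*y*(u y) - 2*(v y) + v 1 - y * u 1)
        (2 * u x - u 1) (Set.Icc (0:ℝ) 1) x := by
      have := ((hmul.sub hb).add_const (v 1)).sub hc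
      refine this.congr_deriv ?_
      ring
    have := ((hinner.div_const π).const_sub (α * u 1)).div_const lam
    refine this.congr_deriv ?_
    rw [hD_def]
    try field_simp
    try ring
  have hfD : ∀ x ∈ Set.Icc (0:ℝ) 1, HasDerivWithinAt f (D x) (Set.Icc (0:ℝ) 1) x := by
    intro x hx
    exact (hφ' x hx).congr (fun y hy => hfφ y hy) (hfφ x hx)
  have hDD : ∀ x ∈ Set.Icc (0:ℝ) 1, HasDerivWithinAt D (D' x) (Set.Icc (0:ℝ) 1) x := by
    intro x hx
    have := (((hu' x hx).const_mul 2).const_sub (u 1)).div_const (π*lam)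
    refine this.congr_deriv ?_
    rw [hD'_def]
    ring
  -- positivity of ∫ f²
  have hx1 : ∃ x₁ ∈ Set.Ioo (0:ℝ) 1, f x₁ ≠ 0 := by
    obtain ⟨x₀, hx₀, hfx₀⟩ := hne
    have hcw : ContinuousWithinAt f (Set.Ioo (0:ℝ) 1) x₀ :=
      (hf x₀ hx₀).mono Set.Ioo_subset_Icc_self
    have hev : ∀ᶠ y in nhdsWithin x₀ (Set.Ioo (0:ℝ) 1), f y ≠ 0 :=
      hcw (compl_singleton_mem_nhds hfx₀)
    have hneb : (nhdsWithin x₀ (Set.Ioo (0:ℝ) 1)).NeBot := by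
      rw [← mem_closure_iff_nhdsWithin_neBot, closure_Ioo (by norm_num : (0:ℝ) ≠ 1)]
      exact hx₀
    obtain ⟨x₁, hx₁a, hx₁b⟩ := (hev.and eventually_mem_nhdsWithin).exists
    exact ⟨x₁, hx₁b, hx₁a⟩
  have hf2pos : 0 < ∫ y in (0:ℝ)..1, (f y)^2 := by
    obtain ⟨x₁, hx₁, hfx₁⟩ := hx1
    have hint : IntervalIntegrable (fun y => (f y)^2) volume 0 1 := hfc (hf.pow 2) h0 h1
    rw [intervalIntegral.integral_pos_iff_support_of_nonneg_ae'
      (Filter.Eventually.of_forall (fun y => sq_nonneg (f y))) hint]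
    refine ⟨zero_lt_one, ?_⟩
    have hca : ContinuousAt f x₁ :=
      (hf x₁ (Set.Ioo_subset_Icc_self hx₁)).continuousAt
        (Icc_mem_nhds hx₁.1 hx₁.2)
    have hop : {y : ℝ | f y ≠ 0} ∩ Set.Ioo (0:ℝ) 1 ∈ nhds x₁ := by
      apply Filter.inter_mem
      · exact hca (compl_singleton_mem_nhds hfx₁)
      · exact Ioo_mem_nhds hx₁.1 hx₁.2
    obtain ⟨ε, hε, hball⟩ := Metric.mem_nhds_iff.mp hop
    have hsub2 : Set.Ioo (x₁ - ε) (x₁ + ε) ⊆ Function.support (fun y => (f y)^2) ∩ Set.Ioc 0 1 := by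
      intro y hy
      have hyb : y ∈ Metric.ball x₁ ε := by
        rw [Real.ball_eq_Ioo]; exact hy
      obtain ⟨hy1, hy2⟩ := hball hyb
      exact ⟨pow_ne_zero 2 hy1, Set.Ioo_subset_Ioc_self hy2⟩
    calc (0:ENNReal) < volume (Set.Ioo (x₁ - ε) (x₁ + ε)) := by
          rw [Real.volume_Ioo]
          simp only [ENNReal.ofReal_pos]
          linarith
      _ ≤ _ := measure_mono hsub2
  -- integration by parts identity
  have hDcont : ContinuousOn D (Set.Icc (0:ℝ) 1) :=
    fun x hx => (hDD x hx).continuousWithinAt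
  have hD'cont : ContinuousOn D' (Set.Icc (0:ℝ) 1) := by
    rw [hD'_def]
    exact ((continuousOn_const.mul hf).div_const (π*lam))
  have hibp : (∫ y in (0:ℝ)..1, ((D y)^2 + f y * D' y)) = f 1 * D 1 - f 0 * D 0 := by
    apply intervalIntegral.integral_eq_sub_of_hasDeriv_right_of_le
      (f := fun y => f y * D y) (f' := fun y => (D y)^2 + f y * D' y) zero_le_one
    · exact hf.mul hDcont
    · intro x hx
      have hx' : x ∈ Set.Icc (0:ℝ) 1 := Set.Ioo_subset_Icc_self hx
      have hIcc : Set.Icc (0:ℝ) 1 ∈ nhds x := Icc_mem_nhds hx.1 hx.2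
      have hda : HasDerivAt (fun y => f y * D y) (D x * D x + f x * D' x) x :=
        ((hfD x hx').mul (hDD x hx')).hasDerivAt hIcc
      have : HasDerivAt (fun y => f y * D y) ((D x)^2 + f x * D' x) x := by
        convert hda using 1; ring
      exact this.hasDerivWithinAt
    · exact hfc ((hDcont.pow 2).add (hf.mul hD'cont)) h0 h1
  have hsplit2 : (∫ y in (0:ℝ)..1, ((D y)^2 + f y * D' y))
      = (∫ y in (0:ℝ)..1, (D y)^2) + (-2/(π*lam)) * ∫ y in (0:ℝ)..1, (f y)^2 := by
    rw [intervalIntegral.integral_add (f := fun y => (D y)^2) (g := fun y => f y * D' y) (hfc (hDcont.pow 2) h0 h1) (hfc (hf.mul hD'cont) h0 h1)]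
    congr 1
    rw [← intervalIntegral.integral_const_mul]
    apply intervalIntegral.integral_congr
    intro y _
    rw [hD'_def]
    ring
  have hf0 : f 0 = (α * u 1 - (v 1)/π)/lam := by
    have := hfφ 0 h0
    rw [hu0, hv0] at this
    convert this using 3
    ring
  have hf1 : f 1 = (α * u 1 - (u 1 - v 1)/π)/lam := by
    have := hfφ 1 h1
    convert this using 3
    ring
  have hD0 : D 0 = u 1/(π*lam) := by rw [hD_def]; simp [hu0]
  have hD1 : D 1 = -(u 1)/(π*lam) := by rw [hD_def]; ring_nf
  have hval : f 1 * D 1 - f 0 * D 0 = -((u 1)^2*(2*α - 1/π))/(π*lam^2) := by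
    rw [hf0, hf1, hD0, hD1]
    field_simp
    ring
  have key2 : 2*lam*π * (∫ y in (0:ℝ)..1, (f y)^2)
      = π^2*lam^2 * (∫ y in (0:ℝ)..1, (D y)^2) + (u 1)^2*(2*α*π - 1) := by
    have h := hibp
    rw [hsplit2, hval] at h
    have hpl : π * lam ≠ 0 := mul_ne_zero hπ.ne' hlam
    generalize hX : (∫ y in (0:ℝ)..1, (D y)^2) = X at h ⊢
    generalize hY : (∫ y in (0:ℝ)..1, (f y)^2) = Y at h ⊢
    field_simp at h
    have h2 : (X*(π*lam) + -(2*Y))*(π*lam) = -(u 1^2*(2*α*π - 1)) := by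
      linear_combination h
    linear_combination -h2
  have hIDnn : 0 ≤ ∫ y in (0:ℝ)..1, (D y)^2 := by
    apply intervalIntegral.integral_nonneg zero_le_one
    intro y _
    exact sq_nonneg _
  have hlampos : 0 < lam := by
    by_contra hcon
    push_neg at hcon
    have hlneg : lam < 0 := lt_of_le_of_ne hcon hlam
    have h2 : (0:ℝ) < 2*α*π - 1 := by nlinarith [Real.pi_gt_three]
    have h3 : 0 ≤ π^2*lam^2 * (∫ y in (0:ℝ)..1, (D y)^2) :=
      mul_nonneg (by positivity) hIDnn
    have h4 : 0 ≤ (u 1)^2*(2*α*π - 1) := mul_nonneg (sq_nonneg _) h2.le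
    nlinarith [key2, mul_pos (mul_pos (neg_pos.mpr hlneg) hπ) hf2pos]
  -- ### Part 3: the trigonometric solution
  set ω : ℝ := Real.sqrt (2/(π*lam)) with hω_def
  have hωpos : 0 < ω := Real.sqrt_pos.mpr (by positivity)
  have hω2 : ω^2 = 2/(π*lam) := Real.sq_sqrt (by positivity)
  have hωne : ω ≠ 0 := hωpos.ne'
  have hpil : π*lam*ω^2 = 2 := by
    rw [hω2]; field_simp
  set a : ℝ := f 0 with ha_def
  set b : ℝ := D 0 / ω with hb_def
  set T : ℝ → ℝ := fun y => a * Real.cos (ω*y) + b * Real.sin (ω*y) with hT_def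
  set Td : ℝ → ℝ := fun y => -(a*ω) * Real.sin (ω*y) + (b*ω) * Real.cos (ω*y) with hTd_def
  have hc' : ∀ x : ℝ, HasDerivAt (fun y : ℝ => ω*y) ω x := by
    intro x
    simpa using (hasDerivAt_id x).const_mul ω
  have hsin' : ∀ x : ℝ, HasDerivAt (fun y : ℝ => Real.sin (ω*y)) (Real.cos (ω*x) * ω) x :=
    fun x => (Real.hasDerivAt_sin (ω*x)).comp x (hc' x)
  have hcos' : ∀ x : ℝ, HasDerivAt (fun y : ℝ => Real.cos (ω*y)) (-Real.sin (ω*x) * ω) x :=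
    fun x => (Real.hasDerivAt_cos (ω*x)).comp x (hc' x)
  have hT' : ∀ x : ℝ, HasDerivAt T (Td x) x := by
    intro x
    have := ((hcos' x).const_mul a).add ((hsin' x).const_mul b)
    rw [hT_def, hTd_def]
    refine this.congr_deriv ?_
    ring
  have hTd' : ∀ x : ℝ, HasDerivAt Td (-(ω^2) * T x) x := by
    intro x
    have := ((hsin' x).const_mul (-(a*ω))).add ((hcos' x).const_mul (b*ω))
    rw [hTd_def, hT_def]
    refine this.congr_deriv ?_
    ring
  -- energy function
  set E : ℝ → ℝ := fun y => (D y - Td y)^2 + ω^2 * (f y - T y)^2 with hE_def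
  have hE' : ∀ x ∈ Set.Icc (0:ℝ) 1, HasDerivWithinAt E 0 (Set.Icc (0:ℝ) 1) x := by
    intro x hx
    have hg : HasDerivWithinAt (fun y => f y - T y) (D x - Td x) (Set.Icc (0:ℝ) 1) x :=
      (hfD x hx).sub (hT' x).hasDerivWithinAt
    have hg2 : HasDerivWithinAt (fun y => D y - Td y) (-(ω^2) * (f x - T x))
        (Set.Icc (0:ℝ) 1) x := by
      have h := (hDD x hx).sub (hTd' x).hasDerivWithinAt
      refine h.congr_deriv ?_
      rw [hD'_def]
      simp only
      rw [hω2]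
      field_simp
      ring
    have hE1 : HasDerivWithinAt (fun y => (D y - Td y)^2)
        (2*(D x - Td x)*(-(ω^2) * (f x - T x))) (Set.Icc (0:ℝ) 1) x := by
      have := hg2.pow 2
      refine this.congr_deriv ?_
      push_cast
      ring
    have hE2 : HasDerivWithinAt (fun y => (f y - T y)^2)
        (2*(f x - T x)*(D x - Td x)) (Set.Icc (0:ℝ) 1) x := by
      have := hg.pow 2
      refine this.congr_deriv ?_
      push_cast
      ring
    have := hE1.add (hE2.const_mul (ω^2))
    rw [hE_def]
    refine this.congr_deriv ?_
    ring
  have hEcont : ContinuousOn E (Set.Icc (0:ℝ) 1) := fun x hx => (hE' x hx).continuousWithinAt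
  have hEconst : ∀ x ∈ Set.Icc (0:ℝ) 1, E x = E 0 := by
    apply constant_of_has_deriv_right_zero hEcont
    intro x hx
    have hx' : x ∈ Set.Icc (0:ℝ) 1 := ⟨hx.1, hx.2.le⟩
    exact (hE' x hx').mono_of_mem_nhdsWithin (Icc_mem_nhdsGE_of_mem hx)
  have hTd0 : Td 0 = b*ω := by
    rw [hTd_def]; simp
  have hT0 : T 0 = a := by
    rw [hT_def]; simp
  have hD0b : D 0 = b*ω := by
    rw [hb_def]
    field_simp
  have hE0 : E 0 = 0 := by
    rw [hE_def]
    simp only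
    rw [hTd0, hT0, hD0b, ← ha_def]
    ring
  have hfT : ∀ x ∈ Set.Icc (0:ℝ) 1, f x = T x := by
    intro x hx
    have h := hEconst x hx
    rw [hE0, hE_def] at h
    simp only at h
    have hω2pos : 0 < ω^2 := by positivity
    have h4 : 0 ≤ (D x - Td x)^2 := sq_nonneg _
    have h5 : 0 ≤ ω^2*(f x - T x)^2 := mul_nonneg hω2pos.le (sq_nonneg _)
    have h6 : ω^2*(f x - T x)^2 = 0 := le_antisymm (by linarith) h5
    have h7 : (f x - T x)^2 = 0 := by
      rcases mul_eq_zero.mp h6 with h' | h'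
      · exact absurd h' hω2pos.ne'
      · exact h'
    have h3 : f x - T x = 0 := sq_eq_zero_iff.mp h7
    linarith
  have hDTd : ∀ x ∈ Set.Icc (0:ℝ) 1, D x = Td x := by
    intro x hx
    have hd1 := hfD x hx
    have hd2 : HasDerivWithinAt f (Td x) (Set.Icc (0:ℝ) 1) x :=
      ((hT' x).hasDerivWithinAt).congr (fun y hy => hfT y hy) (hfT x hx)
    exact (uniqueDiffOn_Icc zero_lt_one x hx).eq_deriv _ hd1 hd2
  -- boundary identities
  have hsum : D 0 + D 1 = 0 := by
    rw [hD_def]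
    simp only
    rw [hu0]
    ring
  have hD1b : D 1 = -(a*ω)*Real.sin ω + (b*ω)*Real.cos ω := by
    rw [hDTd 1 h1, hTd_def]
    simp
  have hEqI : a * Real.sin ω = b * (1 + Real.cos ω) := by
    have h := hsum
    rw [hD0b, hD1b] at h
    have h2 : ω * (b + (-a*Real.sin ω + b*Real.cos ω)) = 0 := by linear_combination h
    have h3 : b + (-a*Real.sin ω + b*Real.cos ω) = 0 := by
      rcases mul_eq_zero.mp h2 with h' | h'
      · exact absurd h' hωne
      · exact h'
    linear_combination -h3
  -- value of u 1
  have hA : ω * u 1 = a * Real.sin ω + b*(1 - Real.cos ω) := by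
    have hcongr : u 1 = ∫ t in (0:ℝ)..1, T t := by
      rw [hu_def]
      simp only
      apply intervalIntegral.integral_congr
      intro y hy
      rw [Set.uIcc_of_le zero_le_one] at hy
      exact hfT y hy
    have hW : ∀ x ∈ Set.uIcc (0:ℝ) 1,
        HasDerivAt (fun y => (a * Real.sin (ω*y) - b * Real.cos (ω*y))/ω) (T x) x := by
      intro x _
      have := (((hsin' x).const_mul a).sub ((hcos' x).const_mul b)).div_const ω
      rw [hT_def]
      refine this.congr_deriv ?_
      field_simp
      ring
    have hTcont : ContinuousOn T (Set.Icc (0:ℝ) 1) := by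
      rw [hT_def]
      exact ((continuous_const.mul (Real.continuous_cos.comp (continuous_const.mul
        continuous_id))).add (continuous_const.mul (Real.continuous_sin.comp
        (continuous_const.mul continuous_id)))).continuousOn
    have hTint : IntervalIntegrable T volume 0 1 := hfc hTcont h0 h1
    have hint := intervalIntegral.integral_eq_sub_of_hasDerivAt hW hTint
    rw [hcongr, hint]
    simp only [mul_zero, Real.sin_zero, Real.cos_zero, mul_one]
    field_simp
    ring
  -- Eq II
  have hf1T : f 1 = a * Real.cos ω + b * Real.sin ω := by
    rw [hfT 1 h1, hT_def]
    simp
  have he0 : lam*π*(f 0) = α*π*u 1 - v 1 := by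
    have h := hfφ 0 h0
    rw [hu0, hv0] at h
    generalize hU : u 1 = U at h ⊢
    generalize hV : v 1 = V at h ⊢
    rw [h]
    field_simp [hlam, hπ.ne']
    ring
  have he1 : lam*π*(f 1) = α*π*u 1 - (2*u 1 - 2*v 1 + v 1 - u 1) := by
    have h := hfφ 1 h1
    generalize hU : u 1 = U at h ⊢
    generalize hV : v 1 = V at h ⊢
    rw [h]
    field_simp [hlam, hπ.ne']
  have hEqII : lam*π*(a + (a * Real.cos ω + b * Real.sin ω)) = 2*α*π*u 1 - u 1 := by
    rw [← hf1T, ha_def]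
    linear_combination he0 + he1
  -- final algebra
  have hpyth : Real.sin ω^2 + Real.cos ω^2 = 1 := Real.sin_sq_add_cos_sq ω
  have stepA : u 1 * ω = 2*b := by linear_combination hA + hEqI
  have stepB : a + a*Real.cos ω + b*Real.sin ω = (2*α*π - 1)*ω*b := by
    linear_combination (ω^2/2) * hEqII + (-(a + a*Real.cos ω + b*Real.sin ω)/2) * hpil
      + ((2*α*π-1)*ω/2) * stepA
  refine ⟨hlampos, ⟨D, D', fun x hx => ?_⟩, ?_⟩
  · have hx' : x ∈ Set.Icc (0:ℝ) 1 := Set.Ioo_subset_Icc_self hx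
    refine ⟨(hfD x hx').mono Set.Ioo_subset_Icc_self,
      (hDD x hx').mono Set.Ioo_subset_Icc_self, ?_⟩
    rw [hD'_def]
    simp only
    field_simp
  · by_cases hb0 : b = 0
    · have ha0 : a ≠ 0 := by
        intro ha0
        obtain ⟨x₁, hx₁, hfx₁⟩ := hne
        apply hfx₁
        rw [hfT x₁ hx₁, hT_def]
        simp [ha0, hb0]
      have hs0 : Real.sin ω = 0 := by
        have h := hEqI
        rw [hb0] at h
        simp only [zero_mul] at h
        rcases mul_eq_zero.mp h with h' | h'
        · exact absurd h' ha0
        · exact h'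
      have hc1 : Real.cos ω = -1 := by
        have h := stepB
        rw [hb0, hs0] at h
        have h2 : a * (1 + Real.cos ω) = 0 := by linear_combination h
        rcases mul_eq_zero.mp h2 with h' | h'
        · exact absurd h' ha0
        · linarith
      rw [hs0, hc1]
      ring
    · have hmain : b * (2 + 2*Real.cos ω + ω*Real.sin ω*(1 - 2*α*π)) = 0 := by
        linear_combination (Real.sin ω) * stepB + (-(1 + Real.cos ω)) * hEqI + (-b) * hpyth
      rcases mul_eq_zero.mp hmain with h' | h'
      · exact absurd h' hb0
      · exact h'
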